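/- Let (ν, P, P̃, U) ∈ K_d, let θ̃ be a nonzero complex number, R = θ̃ P̃ Uᵗ, φ̃_i = R φ_i R^{-1}, ẽ_{i,j} = R e_{i,j} R^{-1}, and define 𝔞(β) = P̃ βᵗ P̃^{-1} for a (d+1)×(d+1) complex matrix β. Then: 𝔞(φ_i) = φ_i and 𝔞(φ̃_i) = φ̃_i for all i = 1,...,d, and 𝔞(e_{i,j}) = (p̃_j/p̃_i) e_{j,i} and 𝔞(ẽ_{i,j}) = (p_j/p_i) ẽ_{j,i} for all 0 ≤ i ≠ j ≤ d. -/

import Mathlib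

open Matrix Finset

lemma stdBasis_transpose {n : ℕ} (i j : Fin n) (c : ℂ) :
    (Matrix.single i j c).transpose = Matrix.single j i c := by
  ext a b
  simp [Matrix.single, Matrix.transpose_apply, and_comm]

lemma conj_diag_std {n : ℕ} (v : Fin n → ℂ) (i j : Fin n) :
    Matrix.diagonal v * Matrix.single i j (1:ℂ) *
      Matrix.diagonal (fun k => (v k)⁻¹) =
      (v i / v j) • Matrix.single i j 1 := by
  ext a b
  by_cases h1 : i = a <;> by_cases h2 : j = b <;>
    simp [Matrix.mul_diagonal, Matrix.diagonal_mul, Matrix.single,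
      Matrix.smul_apply, h1, h2, div_eq_mul_inv]

theorem stmt_4 (d : ℕ) (hd : 1 ≤ d) (ν : ℂ) (hν : ν ≠ 0)
    (p pt : Fin (d+1) → ℂ) (U : Matrix (Fin (d+1)) (Fin (d+1)) ℂ)
    (hp0 : p 0 = 1/ν) (hpt0 : pt 0 = 1/ν)
    (hU : ∀ j, U 0 j = 1 ∧ U j 0 = 1)
    (hK : ν • (Matrix.diagonal p * U * Matrix.diagonal pt * U.transpose) = 1)
    (θt : ℂ) (hθt : θt ≠ 0) (R : Matrix (Fin (d+1)) (Fin (d+1)) ℂ)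
    (hR : R = θt • (Matrix.diagonal pt * U.transpose))
    (e : Fin (d+1) → Fin (d+1) → Matrix (Fin (d+1)) (Fin (d+1)) ℂ)
    (he : ∀ i j, e i j = Matrix.single i j 1)
    (φ : Fin (d+1) → Matrix (Fin (d+1)) (Fin (d+1)) ℂ)
    (hφ : ∀ i, φ i = e i i - (((d : ℂ) + 1)⁻¹) • 1)
    (φt : Fin (d+1) → Matrix (Fin (d+1)) (Fin (d+1)) ℂ)
    (hφt : ∀ i, φt i = R * φ i * R⁻¹)
    (et : Fin (d+1) → Fin (d+1) → Matrix (Fin (d+1)) (Fin (d+1)) ℂ)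
    (het : ∀ i j, et i j = R * e i j * R⁻¹)
    (a : Matrix (Fin (d+1)) (Fin (d+1)) ℂ → Matrix (Fin (d+1)) (Fin (d+1)) ℂ)
    (ha : ∀ β, a β = Matrix.diagonal pt * β.transpose * (Matrix.diagonal pt)⁻¹) :
    (∀ i : Fin (d+1), i ≠ 0 → a (φ i) = φ i ∧ a (φt i) = φt i) ∧
    (∀ i j : Fin (d+1), i ≠ j →
      a (e i j) = (pt j / pt i) • e j i ∧ a (et i j) = (p j / p i) • et j i) := by
  set Dp := Matrix.diagonal p with hDp
  set Dpt := Matrix.diagonal pt with hDpt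
  -- nonvanishing of p and pt entries via determinants
  have hdet : (ν • (Dp * U * Dpt * U.transpose)).det = 1 := by rw [hK]; simp
  rw [Matrix.det_smul] at hdet
  simp only [Matrix.det_mul, Matrix.det_transpose, hDp, hDpt, Matrix.det_diagonal] at hdet
  have hp : ∀ i, p i ≠ 0 := by
    intro i hi
    rw [Finset.prod_eq_zero (Finset.mem_univ i) hi] at hdet
    simp at hdet
  have hpt : ∀ i, pt i ≠ 0 := by
    intro i hi
    rw [Finset.prod_eq_zero (Finset.mem_univ i) hi] at hdet
    simp at hdet
  -- explicit diagonal inverses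
  have hDp1 : Dp * Matrix.diagonal (fun k => (p k)⁻¹) = 1 := by
    rw [hDp, Matrix.diagonal_mul_diagonal]
    convert Matrix.diagonal_one using 2
    exact funext fun i => mul_inv_cancel₀ (hp i)
  have hDpt1 : Dpt * Matrix.diagonal (fun k => (pt k)⁻¹) = 1 := by
    rw [hDpt, Matrix.diagonal_mul_diagonal]
    convert Matrix.diagonal_one using 2
    exact funext fun i => mul_inv_cancel₀ (hpt i)
  have hDpinv : Dp⁻¹ = Matrix.diagonal (fun k => (p k)⁻¹) :=
    Matrix.inv_eq_right_inv hDp1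
  have hDptinv : Dpt⁻¹ = Matrix.diagonal (fun k => (pt k)⁻¹) :=
    Matrix.inv_eq_right_inv hDpt1
  have hDptr : Dpt * Dpt⁻¹ = 1 := by rw [hDptinv]; exact hDpt1
  have hDpl : Dp⁻¹ * Dp = 1 := by
    rw [hDpinv]; exact (mul_eq_one_comm).mp (hDpinv ▸ (hDpinv ▸ hDp1))
  -- R inverse
  have hKey : (ν • (Dp * U)) * (Dpt * U.transpose) = 1 := by
    rw [Matrix.smul_mul, ← mul_assoc, hK]
  have hKey' : (Dpt * U.transpose) * (ν • (Dp * U)) = 1 :=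
    mul_eq_one_comm.mp hKey
  have hRr : R * ((ν / θt) • (Dp * U)) = 1 := by
    rw [hR, smul_mul_smul_comm]
    have : θt * (ν / θt) = ν := by field_simp
    rw [this]
    calc ν • (Dpt * U.transpose * (Dp * U))
        = (Dpt * U.transpose) * (ν • (Dp * U)) := by
          rw [Matrix.mul_smul]
      _ = 1 := hKey'
  have hRinv : R⁻¹ = (ν / θt) • (Dp * U) := Matrix.inv_eq_right_inv hRr
  have hRl : R⁻¹ * R = 1 := by rw [hRinv]; exact mul_eq_one_comm.mp hRr
  have hRr' : R * R⁻¹ = 1 := by rw [hRinv]; exact hRr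
  -- inner automorphism on p-side
  have hinner : ∀ i j : Fin (d+1),
      Dp * (e i j).transpose * Dp⁻¹ = (p j / p i) • e j i := by
    intro i j
    rw [he, he, stdBasis_transpose, hDpinv, conj_diag_std]
  have hinnerpt : ∀ i j : Fin (d+1),
      Dpt * (e i j).transpose * Dpt⁻¹ = (pt j / pt i) • e j i := by
    intro i j
    rw [he, he, stdBasis_transpose, hDptinv, conj_diag_std]
  -- key identity: a (R * β * R⁻¹) = R * (Dp * βᵀ * Dp⁻¹) * R⁻¹
  have hkeyid : ∀ β : Matrix (Fin (d+1)) (Fin (d+1)) ℂ,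
      a (R * β * R⁻¹) = R * (Dp * β.transpose * Dp⁻¹) * R⁻¹ := by
    intro β
    rw [ha, Matrix.transpose_mul, Matrix.transpose_mul, hRinv, hR]
    simp only [Matrix.transpose_smul, Matrix.transpose_mul, Matrix.transpose_transpose,
      hDp, hDpt, Matrix.diagonal_transpose, smul_mul_assoc, Matrix.mul_smul, mul_assoc]
    rw [← hDpt, ← hDp]
    have e1 : Dpt * Dpt⁻¹ = 1 := hDptr
    have e2 : Dp⁻¹ * Dp = 1 := hDpl
    rw [show Dpt * (U.transpose * (Dp * (β.transpose * (U * (Dpt * Dpt⁻¹))))) =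
        Dpt * (U.transpose * (Dp * (β.transpose * U))) by rw [e1]; simp [mul_assoc]]
    rw [show Dpt * (U.transpose * (Dp * (β.transpose * (Dp⁻¹ * (Dp * U))))) =
        Dpt * (U.transpose * (Dp * (β.transpose * U))) by
      rw [← mul_assoc Dp⁻¹ Dp U, e2]; simp [mul_assoc]]
    rw [smul_smul, smul_smul]
    congr 1
    field_simp
  -- a on φ
  have haφ : ∀ i, a (φ i) = φ i := by
    intro i
    rw [ha, hφ, Matrix.transpose_sub, Matrix.transpose_smul, Matrix.transpose_one]
    rw [Matrix.mul_sub, Matrix.sub_mul, Matrix.mul_smul, mul_one, Matrix.smul_mul, hDptr]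
    have := hinnerpt i i
    rw [div_self (hpt i), one_smul] at this
    rw [this]
  have hinnerφ : ∀ i, Dp * (φ i).transpose * Dp⁻¹ = φ i := by
    intro i
    rw [hφ, Matrix.transpose_sub, Matrix.transpose_smul, Matrix.transpose_one]
    rw [Matrix.mul_sub, Matrix.sub_mul, Matrix.mul_smul, mul_one, Matrix.smul_mul]
    have h1 : Dp * Dp⁻¹ = 1 := by rw [hDpinv]; exact hDp1
    rw [h1]
    have := hinner i i
    rw [div_self (hp i), one_smul] at this
    rw [this]
  refine ⟨fun i _ => ⟨haφ i, ?_⟩, fun i j _ => ⟨?_, ?_⟩⟩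
  · rw [hφt, hkeyid, hinnerφ, ← hφt]
  · rw [ha, he, he, stdBasis_transpose, hDptinv, conj_diag_std]
  · rw [het, hkeyid, hinner, Matrix.mul_smul, Matrix.smul_mul, ← het]
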